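/- (Trace bounds on the a posteriori error covariance) Under the stated assumptions, the a posteriori error covariance Σ̄ := (Cᵀ V⁻¹ C + Σ⁻¹)⁻¹ satisfies n/(M + 1/λ_min(W)) ≤ tr(Σ̄) ≤ n/m. -/

import Mathlib

open Matrix

section RiccatiAux

variable {n : ℕ} {P : Matrix (Fin n) (Fin n) ℝ}

private lemma spectral_real (hP : P.IsHermitian) :
    P = (hP.eigenvectorUnitary : Matrix (Fin n) (Fin n) ℝ) * diagonal hP.eigenvalues *
      star (hP.eigenvectorUnitary : Matrix (Fin n) (Fin n) ℝ) := by
  simpa [RCLike.ofReal_real_eq_id, Function.id_comp] using hP.spectral_theorem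

private lemma conj_psd (hP : P.IsHermitian) {f : Fin n → ℝ} (hf : ∀ i, 0 ≤ f i) :
    ((hP.eigenvectorUnitary : Matrix (Fin n) (Fin n) ℝ) * diagonal f *
      star (hP.eigenvectorUnitary : Matrix (Fin n) (Fin n) ℝ)).PosSemidef := by
  rw [Matrix.star_eq_conjTranspose]
  exact (Matrix.posSemidef_diagonal_iff.mpr hf).mul_mul_conjTranspose_same _

private lemma smul_one_conj (hP : P.IsHermitian) (a : ℝ) :
    a • (1 : Matrix (Fin n) (Fin n) ℝ) =
      (hP.eigenvectorUnitary : Matrix (Fin n) (Fin n) ℝ) * (a • 1) *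
        star (hP.eigenvectorUnitary : Matrix (Fin n) (Fin n) ℝ) := by
  rw [Matrix.mul_smul, Matrix.smul_mul, mul_one,
    Matrix.mem_unitaryGroup_iff.mp hP.eigenvectorUnitary.2]

private lemma star_dot_self_basis (hP : P.IsHermitian) (i : Fin n) :
    star ⇑(hP.eigenvectorBasis i) ⬝ᵥ ⇑(hP.eigenvectorBasis i) = 1 := by
  have h1 : ‖hP.eigenvectorBasis i‖ = 1 := hP.eigenvectorBasis.orthonormal.1 i
  have h2 : (inner ℝ (hP.eigenvectorBasis i) (hP.eigenvectorBasis i) : ℝ) = 1 := by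
    rw [real_inner_self_eq_norm_mul_norm, h1, one_mul]
  rw [EuclideanSpace.inner_eq_star_dotProduct] at h2
  rwa [dotProduct_comm] at h2

private lemma eig_le_of_psd (hP : P.IsHermitian) {a : ℝ}
    (h : (a • (1 : Matrix (Fin n) (Fin n) ℝ) - P).PosSemidef) (i : Fin n) :
    hP.eigenvalues i ≤ a := by
  have h3 := h.dotProduct_mulVec_nonneg ⇑(hP.eigenvectorBasis i)
  rw [Matrix.sub_mulVec, hP.mulVec_eigenvectorBasis i, Matrix.smul_mulVec,
    Matrix.one_mulVec, dotProduct_sub, dotProduct_smul,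
    dotProduct_smul, star_dot_self_basis hP i] at h3
  simp only [smul_eq_mul, mul_one] at h3
  linarith

private lemma eig_ge_of_psd (hP : P.IsHermitian) {a : ℝ}
    (h : (P - a • (1 : Matrix (Fin n) (Fin n) ℝ)).PosSemidef) (i : Fin n) :
    a ≤ hP.eigenvalues i := by
  have h3 := h.dotProduct_mulVec_nonneg ⇑(hP.eigenvectorBasis i)
  rw [Matrix.sub_mulVec, hP.mulVec_eigenvectorBasis i, Matrix.smul_mulVec,
    Matrix.one_mulVec, dotProduct_sub, dotProduct_smul,
    dotProduct_smul, star_dot_self_basis hP i] at h3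
  simp only [smul_eq_mul, mul_one] at h3
  linarith

private lemma sub_smul_psd (hP : P.IsHermitian) {a : ℝ}
    (h : ∀ i, a ≤ hP.eigenvalues i) :
    (P - a • (1 : Matrix (Fin n) (Fin n) ℝ)).PosSemidef := by
  have key : P - a • (1 : Matrix (Fin n) (Fin n) ℝ) =
      (hP.eigenvectorUnitary : Matrix (Fin n) (Fin n) ℝ) *
        diagonal (fun i => hP.eigenvalues i - a) *
        star (hP.eigenvectorUnitary : Matrix (Fin n) (Fin n) ℝ) := by
    nth_rewrite 1 [spectral_real hP]
    rw [smul_one_conj hP a, ← Matrix.sub_mul, ← Matrix.mul_sub,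
      Matrix.smul_one_eq_diagonal, Matrix.diagonal_sub]
  rw [key]
  exact conj_psd hP fun i => sub_nonneg.mpr (h i)

private lemma inv_eq_conj (hP : P.PosDef) :
    P⁻¹ = (hP.1.eigenvectorUnitary : Matrix (Fin n) (Fin n) ℝ) *
        diagonal (fun i => (hP.1.eigenvalues i)⁻¹) *
        star (hP.1.eigenvectorUnitary : Matrix (Fin n) (Fin n) ℝ) := by
  set U : Matrix (Fin n) (Fin n) ℝ := (hP.1.eigenvectorUnitary : Matrix (Fin n) (Fin n) ℝ)
  have hU : star U * U = 1 := Matrix.mem_unitaryGroup_iff'.mp hP.1.eigenvectorUnitary.2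
  have hdd : diagonal (fun i => (hP.1.eigenvalues i)⁻¹) * diagonal hP.1.eigenvalues =
      (1 : Matrix (Fin n) (Fin n) ℝ) := by
    rw [Matrix.diagonal_mul_diagonal]
    rw [show (fun i => (hP.1.eigenvalues i)⁻¹ * hP.1.eigenvalues i) = fun _ => (1:ℝ) from
      funext fun i => inv_mul_cancel₀ (hP.eigenvalues_pos i).ne', Matrix.diagonal_one]
  have hQ : (U * diagonal (fun i => (hP.1.eigenvalues i)⁻¹) * star U) *
      (U * diagonal hP.1.eigenvalues * star U) = 1 := by
    calc U * diagonal (fun i => (hP.1.eigenvalues i)⁻¹) * star U *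
          (U * diagonal hP.1.eigenvalues * star U)
        = U * (diagonal (fun i => (hP.1.eigenvalues i)⁻¹) * ((star U * U) *
            (diagonal hP.1.eigenvalues * star U))) := by
          simp only [mul_assoc]
      _ = 1 := by
          rw [hU, one_mul, ← mul_assoc (diagonal _), hdd, one_mul,
            Matrix.mem_unitaryGroup_iff.mp hP.1.eigenvectorUnitary.2]
  rw [← spectral_real hP.1] at hQ
  exact Matrix.inv_eq_left_inv hQ

private lemma trace_inv_eq (hP : P.PosDef) :
    P⁻¹.trace = ∑ i, (hP.1.eigenvalues i)⁻¹ := by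
  rw [inv_eq_conj hP, Matrix.trace_mul_cycle,
    Matrix.mem_unitaryGroup_iff'.mp hP.1.eigenvectorUnitary.2, one_mul,
    Matrix.trace_diagonal]

private lemma inv_le_smul_one (hP : P.PosDef) {a : ℝ} (ha : 0 < a)
    (h : ∀ i, a ≤ hP.1.eigenvalues i) :
    (a⁻¹ • (1 : Matrix (Fin n) (Fin n) ℝ) - P⁻¹).PosSemidef := by
  have key : a⁻¹ • (1 : Matrix (Fin n) (Fin n) ℝ) - P⁻¹ =
      (hP.1.eigenvectorUnitary : Matrix (Fin n) (Fin n) ℝ) *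
        diagonal (fun i => a⁻¹ - (hP.1.eigenvalues i)⁻¹) *
        star (hP.1.eigenvectorUnitary : Matrix (Fin n) (Fin n) ℝ) := by
    rw [inv_eq_conj hP]
    nth_rewrite 1 [smul_one_conj hP.1 a⁻¹]
    rw [← Matrix.sub_mul, ← Matrix.mul_sub, Matrix.smul_one_eq_diagonal, Matrix.diagonal_sub]
  rw [key]
  refine conj_psd hP.1 fun i => ?_
  have h1 : 0 < hP.1.eigenvalues i := hP.eigenvalues_pos i
  have h2 : (hP.1.eigenvalues i)⁻¹ ≤ a⁻¹ := inv_anti₀ ha (h i)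
  linarith

end RiccatiAux

/-- Trace bounds on the a posteriori error covariance
`S̄ = (Cᵀ V⁻¹ C + S⁻¹)⁻¹`: `n/(M + 1/λ_min(W)) ≤ tr S̄ ≤ n/m`, where
`m = min_i c_i²/σ_i²` and `M = max_i c_i²/σ_i²`. -/
theorem riccati_posterior_trace_bounds {n : ℕ} (hn : 1 ≤ n)
    (A W S : Matrix (Fin n) (Fin n) ℝ)
    (c σ : Fin n → ℝ) (hc : ∀ i, 0 < c i) (hσ : ∀ i, 0 < σ i)
    (hW : W.PosDef) (hS : S.PosDef)
    (hric : S = A * S * Aᵀ -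
        A * S * (Matrix.diagonal c)ᵀ *
          (Matrix.diagonal c * S * (Matrix.diagonal c)ᵀ +
            Matrix.diagonal fun i => σ i ^ 2)⁻¹ *
          Matrix.diagonal c * S * Aᵀ + W) :
    (n : ℝ) / ((⨆ i, c i ^ 2 / σ i ^ 2) + 1 / ⨅ j, hW.1.eigenvalues j) ≤
        (((Matrix.diagonal c)ᵀ * (Matrix.diagonal fun i => σ i ^ 2)⁻¹ *
          Matrix.diagonal c + S⁻¹)⁻¹).trace ∧
      (((Matrix.diagonal c)ᵀ * (Matrix.diagonal fun i => σ i ^ 2)⁻¹ *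
          Matrix.diagonal c + S⁻¹)⁻¹).trace ≤ (n : ℝ) / ⨅ i, c i ^ 2 / σ i ^ 2 := by
  have hnE : Nonempty (Fin n) := ⟨⟨0, hn⟩⟩
  set D : Matrix (Fin n) (Fin n) ℝ := Matrix.diagonal c with hD
  set Vm : Matrix (Fin n) (Fin n) ℝ := Matrix.diagonal (fun i => σ i ^ 2) with hVmdef
  have hVm : Vm.PosDef := Matrix.PosDef.diagonal (fun i => pow_pos (hσ i) 2)
  set d : Fin n → ℝ := fun i => c i ^ 2 / σ i ^ 2 with hd
  have hdpos : ∀ i, 0 < d i := fun i => div_pos (pow_pos (hc i) 2) (pow_pos (hσ i) 2)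
  have hVinv : Vm⁻¹ = Matrix.diagonal (fun i => (σ i ^ 2)⁻¹) := by
    apply Matrix.inv_eq_left_inv
    rw [hVmdef, Matrix.diagonal_mul_diagonal,
      show (fun i => (σ i ^ 2)⁻¹ * σ i ^ 2) = fun _ => (1:ℝ) from
        funext fun i => inv_mul_cancel₀ (pow_pos (hσ i) 2).ne', Matrix.diagonal_one]
  have hB0 : Dᵀ * Vm⁻¹ * D = Matrix.diagonal d := by
    rw [hD, Matrix.diagonal_transpose, hVinv, Matrix.diagonal_mul_diagonal,
      Matrix.diagonal_mul_diagonal]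
    exact congrArg Matrix.diagonal (funext fun i => by
      show c i * (σ i ^ 2)⁻¹ * c i = d i
      simp only [hd]
      rw [div_eq_mul_inv]; ring)
  set B : Matrix (Fin n) (Fin n) ℝ := Matrix.diagonal d + S⁻¹ with hBdef
  have hBd : B.PosDef := (Matrix.PosDef.diagonal hdpos).add hS.inv
  -- scalars
  set lam : ℝ := ⨅ j, hW.1.eigenvalues j with hlam
  have hlam_le : ∀ j, lam ≤ hW.1.eigenvalues j := fun j =>
    ciInf_le (Set.Finite.bddBelow (Set.finite_range _)) j
  have hlam_pos : 0 < lam := by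
    obtain ⟨j, hj⟩ := exists_eq_ciInf_of_finite (f := hW.1.eigenvalues)
    rw [hlam, ← hj]; exact hW.eigenvalues_pos j
  set m : ℝ := ⨅ i, d i with hm
  have hm_le : ∀ i, m ≤ d i := fun i => ciInf_le (Set.Finite.bddBelow (Set.finite_range _)) i
  have hm_pos : 0 < m := by
    obtain ⟨i, hi⟩ := exists_eq_ciInf_of_finite (f := d)
    rw [hm, ← hi]; exact hdpos i
  set Mx : ℝ := ⨆ i, d i with hMx
  have hMx_ge : ∀ i, d i ≤ Mx := fun i =>
    le_ciSup (Set.Finite.bddAbove (Set.finite_range _)) i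
  have hMx_pos : 0 < Mx := (hdpos ⟨0, hn⟩).trans_le (hMx_ge _)
  set K : ℝ := Mx + lam⁻¹ with hK
  have hK_pos : 0 < K := add_pos hMx_pos (inv_pos.mpr hlam_pos)
  -- Woodbury: B⁻¹ = S - S Dᵀ Pm⁻¹ D S
  set Pm : Matrix (Fin n) (Fin n) ℝ := D * S * Dᵀ + Vm with hPm
  have hDSD : (D * S * Dᵀ).PosSemidef := by
    have := hS.posSemidef.mul_mul_conjTranspose_same D
    rwa [Matrix.conjTranspose_eq_transpose_of_trivial] at this
  have hPmd : Pm.PosDef := by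
    rw [hPm]; exact Matrix.PosDef.posSemidef_add hDSD hVm
  have hSdet : IsUnit S.det := (Matrix.isUnit_iff_isUnit_det S).mp hS.isUnit
  have hVdet : IsUnit Vm.det := (Matrix.isUnit_iff_isUnit_det Vm).mp hVm.isUnit
  have hSS : (S⁻¹)⁻¹ = S := Matrix.nonsing_inv_nonsing_inv S hSdet
  have hVV : (Vm⁻¹)⁻¹ = Vm := Matrix.nonsing_inv_nonsing_inv Vm hVdet
  have hACu : IsUnit ((Vm⁻¹)⁻¹ + D * (S⁻¹)⁻¹ * Dᵀ) := by
    rw [hVV, hSS, add_comm, ← hPm]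
    exact hPmd.isUnit
  have hwood := Matrix.add_mul_mul_inv_eq_sub S⁻¹ Dᵀ Vm⁻¹ D hS.inv.isUnit hVm.inv.isUnit hACu
  rw [hSS, hVV, add_comm Vm (D * S * Dᵀ), ← hPm] at hwood
  have hwood' : B⁻¹ = S - S * Dᵀ * Pm⁻¹ * D * S := by
    rw [hBdef, ← hB0, add_comm (Dᵀ * Vm⁻¹ * D) S⁻¹, hwood]
  -- S - W is PSD
  have hSW : (S - W).PosSemidef := by
    have h1 : S - W = A * S * Aᵀ - A * S * Dᵀ * Pm⁻¹ * D * S * Aᵀ := by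
      conv_lhs => rw [hric]
      abel
    have h2 : A * S * Aᵀ - A * S * Dᵀ * Pm⁻¹ * D * S * Aᵀ = A * B⁻¹ * Aᵀ := by
      rw [hwood']
      noncomm_ring
    rw [h1, h2]
    have := hBd.inv.posSemidef.mul_mul_conjTranspose_same A
    rwa [Matrix.conjTranspose_eq_transpose_of_trivial] at this
  have hWlam : (W - lam • (1 : Matrix (Fin n) (Fin n) ℝ)).PosSemidef :=
    sub_smul_psd hW.1 hlam_le
  have hSlam : (S - lam • (1 : Matrix (Fin n) (Fin n) ℝ)).PosSemidef := by
    have := hSW.add hWlam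
    rwa [sub_add_sub_cancel] at this
  have hSeig : ∀ i, lam ≤ hS.1.eigenvalues i := eig_ge_of_psd hS.1 hSlam
  have hSinvle : (lam⁻¹ • (1 : Matrix (Fin n) (Fin n) ℝ) - S⁻¹).PosSemidef :=
    inv_le_smul_one hS hlam_pos hSeig
  -- eigenvalue bounds for B
  have hBlow : (B - m • (1 : Matrix (Fin n) (Fin n) ℝ)).PosSemidef := by
    have heq : B - m • (1 : Matrix (Fin n) (Fin n) ℝ) =
        Matrix.diagonal (fun i => d i - m) + S⁻¹ := by
      rw [hBdef]
      ext i j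
      rcases eq_or_ne i j with h | h
      · subst h
        simp only [Matrix.add_apply, Matrix.sub_apply, Matrix.smul_apply, Matrix.one_apply_eq,
          Matrix.diagonal_apply_eq, smul_eq_mul]
        ring
      · simp [Matrix.add_apply, Matrix.sub_apply, Matrix.smul_apply, Matrix.one_apply_ne h,
          Matrix.diagonal_apply_ne _ h]
    rw [heq]
    exact (Matrix.posSemidef_diagonal_iff.mpr fun i => sub_nonneg.mpr (hm_le i)).add
      hS.inv.posSemidef
  have hBup : (K • (1 : Matrix (Fin n) (Fin n) ℝ) - B).PosSemidef := by
    have heq : K • (1 : Matrix (Fin n) (Fin n) ℝ) - B =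
        Matrix.diagonal (fun i => Mx - d i) +
          (lam⁻¹ • (1 : Matrix (Fin n) (Fin n) ℝ) - S⁻¹) := by
      rw [hK, hBdef]
      ext i j
      rcases eq_or_ne i j with h | h
      · subst h
        simp only [Matrix.add_apply, Matrix.sub_apply, Matrix.smul_apply, Matrix.one_apply_eq,
          Matrix.diagonal_apply_eq, smul_eq_mul]
        ring
      · simp [Matrix.add_apply, Matrix.sub_apply, Matrix.smul_apply, Matrix.one_apply_ne h,
          Matrix.diagonal_apply_ne _ h]
    rw [heq]
    exact (Matrix.posSemidef_diagonal_iff.mpr fun i => sub_nonneg.mpr (hMx_ge i)).add hSinvle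
  have hμpos : ∀ i, 0 < hBd.1.eigenvalues i := hBd.eigenvalues_pos
  have hμlow : ∀ i, m ≤ hBd.1.eigenvalues i := eig_ge_of_psd hBd.1 hBlow
  have hμup : ∀ i, hBd.1.eigenvalues i ≤ K := eig_le_of_psd hBd.1 hBup
  have htr : B⁻¹.trace = ∑ i, (hBd.1.eigenvalues i)⁻¹ := trace_inv_eq hBd
  rw [hB0, ← hBdef]
  constructor
  · calc (n : ℝ) / (Mx + 1 / lam) = ∑ _i : Fin n, K⁻¹ := by
          rw [Finset.sum_const, Finset.card_univ, Fintype.card_fin, nsmul_eq_mul,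
            div_eq_mul_inv, hK, one_div]
      _ ≤ ∑ i, (hBd.1.eigenvalues i)⁻¹ :=
          Finset.sum_le_sum fun i _ => inv_anti₀ (hμpos i) (hμup i)
      _ = B⁻¹.trace := htr.symm
  · calc B⁻¹.trace = ∑ i, (hBd.1.eigenvalues i)⁻¹ := htr
      _ ≤ ∑ _i : Fin n, m⁻¹ :=
          Finset.sum_le_sum fun i _ => inv_anti₀ hm_pos (hμlow i)
      _ = (n : ℝ) / m := by
          rw [Finset.sum_const, Finset.card_univ, Fintype.card_fin, nsmul_eq_mul,
            div_eq_mul_inv]
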